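/- Assume that either (A1), (A2), (A3) hold, or (A2), (A4), (A5) hold. Then there exist constants c_{1,r}, c_{2,r} ∈ (0,1) such that c_{1,r}·ℰ_r(σ^♭) ≤ ℰ_r(σ) ≤ c_{2,r}·ℰ_r(σ^♭) for every σ ∈ 𝒮*. -/

import Mathlib

open scoped Classical ENNReal
open Filter MeasureTheory

noncomputable section

namespace MTM

/-- the edge relation of the directed graph `𝒢`: `(i,j) ∈ G₂ ↔ p i j > 0`. -/
def edge (p : ℕ → ℕ → ℝ) (i j : ℕ) : Prop := 0 < p i j

/-- product of transition weights along a word. -/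
def pword (p : ℕ → ℕ → ℝ) : List ℕ → ℝ
  | [] => 1
  | [_] => 1
  | a :: b :: t => p a b * pword p (b :: t)

/-- product of contraction ratios along a word. -/
def sword (sr : ℕ → ℕ → ℝ) : List ℕ → ℝ
  | [] => 1
  | [_] => 1
  | a :: b :: t => sr a b * sword sr (b :: t)

/-- `𝒯(σ)`: all lifts of a word, each letter `i` may be replaced by `i + N`. -/
def lifts (N : ℕ) : List ℕ → Finset (List ℕ)
  | [] => {[]}
  | i :: t => (lifts N t).biUnion fun l => {i :: l, (i + N) :: l}

/-- `Γ(σ) = G_n ∩ 𝒯(σ)`. -/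
def Gam (p : ℕ → ℕ → ℝ) (N : ℕ) (σ : List ℕ) : Finset (List ℕ) :=
  (lifts N σ).filter fun τ => τ.Chain' (edge p)

/-- words over the alphabet `Ψ = {1,…,N}`. -/
def isPsiWord (N : ℕ) (σ : List ℕ) : Prop :=
  σ ≠ [] ∧ ∀ x ∈ σ, x ∈ Finset.Icc 1 N

/-- `σ ∈ 𝒮_*`: a `Ψ`-word having at least one admissible lift. -/
def isSword (p : ℕ → ℕ → ℝ) (N : ℕ) (σ : List ℕ) : Prop :=
  isPsiWord N σ ∧ (Gam p N σ).Nonempty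

/-- `σ ∈ G_*`: admissible words over `Ω = {1,…,2N}`. -/
def isGword (p : ℕ → ℕ → ℝ) (N : ℕ) (σ : List ℕ) : Prop :=
  σ ≠ [] ∧ (∀ x ∈ σ, x ∈ Finset.Icc 1 (2 * N)) ∧ σ.Chain' (edge p)

/-- `σ ∈ H₁^*`: admissible words with all letters in `Ψ`. -/
def isH1word (p : ℕ → ℕ → ℝ) (N : ℕ) (σ : List ℕ) : Prop :=
  σ ≠ [] ∧ (∀ x ∈ σ, x ∈ Finset.Icc 1 N) ∧ σ.Chain' (edge p)

/-- `σ ∈ H₂^*`: admissible words with all letters in `Υ = {N+1,…,2N}`. -/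
def isH2word (p : ℕ → ℕ → ℝ) (N : ℕ) (σ : List ℕ) : Prop :=
  σ ≠ [] ∧ (∀ x ∈ σ, x ∈ Finset.Icc (N + 1) (2 * N)) ∧ σ.Chain' (edge p)

/-- `μ(J_σ) = Σ_{σ̃ ∈ Γ(σ)} χ_{σ̃₁} p_{σ̃}`. -/
def muJ (p : ℕ → ℕ → ℝ) (χ : ℕ → ℝ) (N : ℕ) (σ : List ℕ) : ℝ :=
  ∑ τ ∈ Gam p N σ, χ (τ.headD 0) * pword p τ

/-- `ℰ_r(σ) = μ(J_σ) s_σ^r`, with `ℰ_r(θ) = 1` for the empty word. -/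
def Er (p : ℕ → ℕ → ℝ) (χ : ℕ → ℝ) (sr : ℕ → ℕ → ℝ) (N : ℕ) (r : ℝ) (σ : List ℕ) : ℝ :=
  if σ = [] then 1 else muJ p χ N σ * sword sr σ ^ r

/-- `I_{1,σ}` resp. `I_{2,σ}`: the part of `μ(J_σ)` coming from lifts ending with `i`
(resp. with `i⁺`, when applied with `i + N`). -/
def Ipart (p : ℕ → ℕ → ℝ) (χ : ℕ → ℝ) (N : ℕ) (i : ℕ) (σ : List ℕ) : ℝ :=
  ∑ τ ∈ (Gam p N σ).filter (fun τ => τ.getLastD 0 = i), χ (τ.headD 0) * pword p τ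

/-- all words of a given length over a finite alphabet. -/
def wordsOfLen (S : Finset ℕ) : ℕ → Finset (List ℕ)
  | 0 => {[]}
  | n + 1 => (wordsOfLen S n).biUnion fun l => S.image fun a => a :: l

/-- `𝒮_n` as a finite set of words. -/
def Sn (p : ℕ → ℕ → ℝ) (N n : ℕ) : Finset (List ℕ) :=
  (wordsOfLen (Finset.Icc 1 N) n).filter (isSword p N)

/-- irreducibility of the sub-matrix of `p` indexed by `S`: the corresponding directed
graph is strongly connected. -/
def irreducibleOn (p : ℕ → ℕ → ℝ) (S : Finset ℕ) : Prop :=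
  ∀ i ∈ S, ∀ j ∈ S, ∃ c : List ℕ, (∀ x ∈ c, x ∈ S) ∧ List.Chain (edge p) i (c ++ [j])

/-- Assumption (A1): `P₁, P₂` irreducible and `P₄ = 0`. -/
def A1 (p : ℕ → ℕ → ℝ) (N : ℕ) : Prop :=
  irreducibleOn p (Finset.Icc 1 N) ∧
    irreducibleOn (fun a b => p (a + N) (b + N)) (Finset.Icc 1 N) ∧
    ∀ i ∈ Finset.Icc 1 N, ∀ j ∈ Finset.Icc 1 N, p (i + N) j = 0

/-- Assumption (A2). -/
def A2 (p : ℕ → ℕ → ℝ) (N : ℕ) : Prop :=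
  ∀ i ∈ Finset.Icc 1 N,
    2 ≤ ((Finset.Icc 1 N).filter fun j => 0 < p i j).card ∧
      2 ≤ ((Finset.Icc 1 N).filter fun j => 0 < p (i + N) (j + N)).card

/-- Assumption (A3): `ℳ_{i,j} = ∅` or `ℳ_{i,j} = {(i,j),(i,j⁺),(i⁺,j⁺)}`. -/
def A3 (p : ℕ → ℕ → ℝ) (N : ℕ) : Prop :=
  ∀ i ∈ Finset.Icc 1 N, ∀ j ∈ Finset.Icc 1 N,
    (p i j = 0 ∧ p i (j + N) = 0 ∧ p (i + N) j = 0 ∧ p (i + N) (j + N) = 0) ∨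
      (0 < p i j ∧ 0 < p i (j + N) ∧ p (i + N) j = 0 ∧ 0 < p (i + N) (j + N))

/-- Assumption (A4): `ℳ_{i,j} = ∅` or `ℳ_{i,j} = 𝒩_{i,j}`. -/
def A4 (p : ℕ → ℕ → ℝ) (N : ℕ) : Prop :=
  ∀ i ∈ Finset.Icc 1 N, ∀ j ∈ Finset.Icc 1 N,
    (p i j = 0 ∧ p i (j + N) = 0 ∧ p (i + N) j = 0 ∧ p (i + N) (j + N) = 0) ∨
      (0 < p i j ∧ 0 < p i (j + N) ∧ 0 < p (i + N) j ∧ 0 < p (i + N) (j + N))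

/-- Assumption (A5): `P₁` is irreducible. -/
def A5 (p : ℕ → ℕ → ℝ) (N : ℕ) : Prop := irreducibleOn p (Finset.Icc 1 N)

/-- `T_σ = T_{σ₁σ₂} ∘ ⋯ ∘ T_{σ_{n-1}σ_n}` (identity for words of length `≤ 1`). -/
def Tword {E : Type*} (T : ℕ → ℕ → E → E) : List ℕ → E → E
  | [], x => x
  | [_], x => x
  | a :: b :: t, x => T a b (Tword T (b :: t) x)

/-- the cylinder set `J_σ = T_σ (J_{σ_n})`. -/
def Jword {E : Type*} (T : ℕ → ℕ → E → E) (J : ℕ → Set E) (σ : List ℕ) : Set E :=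
  Tword T σ '' J (σ.getLastD 0)

/-- the Mauldin–Williams fractal `K = ⋂_k ⋃_{σ ∈ G_k} J_σ`. -/
def attractor {E : Type*} (p : ℕ → ℕ → ℝ) (N : ℕ) (T : ℕ → ℕ → E → E) (J : ℕ → Set E) :
    Set E :=
  ⋂ n : ℕ, ⋃ σ ∈ {σ : List ℕ | isGword p N σ ∧ σ.length = n + 1}, Jword T J σ

/-- `μ` is reducible: `μ = ν₁ ∘ π₁⁻¹` for the Markov-type measure `ν₁` associated with some
`N × N` row-stochastic matrix and positive probability vector; equivalently, the cylinder
values of `μ` are of Markov type. -/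
def reducible {E : Type*} [MeasurableSpace E] (p : ℕ → ℕ → ℝ) (N : ℕ)
    (T : ℕ → ℕ → E → E) (J : ℕ → Set E) (μ : Measure E) : Prop :=
  ∃ (pt : ℕ → ℕ → ℝ) (χt : ℕ → ℝ),
    (∀ i ∈ Finset.Icc 1 N, ∀ j ∈ Finset.Icc 1 N, 0 ≤ pt i j) ∧
      (∀ i ∈ Finset.Icc 1 N, ∑ j ∈ Finset.Icc 1 N, pt i j = 1) ∧
      (∀ i ∈ Finset.Icc 1 N, 0 < χt i) ∧
      (∑ i ∈ Finset.Icc 1 N, χt i = 1) ∧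
      ∀ σ : List ℕ, isSword p N σ →
        μ (Jword T J σ) = ENNReal.ofReal (χt (σ.headD 0) * pword pt σ)

/-- `e^r_{k,r}(μ)`: the `k`-th quantization error of order `r`, to the `r`-th power. -/
def quantErr {E : Type*} [PseudoMetricSpace E] [MeasurableSpace E] (r : ℝ) (μ : Measure E)
    (k : ℕ) : ℝ :=
  sInf ((fun α : Set E => ∫ x, Metric.infDist x α ^ r ∂μ) ''
    {α : Set E | α.Nonempty ∧ α.Finite ∧ α.ncard ≤ k})

/-- the upper quantization coefficient `Q̄_r^s(μ) = limsup_k k^{r/s} e^r_{k,r}(μ)`. -/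
def upperQC {E : Type*} [PseudoMetricSpace E] [MeasurableSpace E] (r s : ℝ)
    (μ : Measure E) : ℝ≥0∞ :=
  limsup (fun k : ℕ => ENNReal.ofReal ((k : ℝ) ^ (r / s) * quantErr r μ k)) atTop

/-- the lower quantization coefficient `Q̲_r^s(μ)`. -/
def lowerQC {E : Type*} [PseudoMetricSpace E] [MeasurableSpace E] (r s : ℝ)
    (μ : Measure E) : ℝ≥0∞ :=
  liminf (fun k : ℕ => ENNReal.ofReal ((k : ℝ) ^ (r / s) * quantErr r μ k)) atTop

/-- the upper quantization dimension `D̄_r(μ) = limsup_k log k / (-log e_{k,r}(μ))`. -/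
def upperQD {E : Type*} [PseudoMetricSpace E] [MeasurableSpace E] (r : ℝ)
    (μ : Measure E) : ℝ :=
  limsup (fun k : ℕ => Real.log k / (-Real.log (quantErr r μ k ^ (1 / r)))) atTop

/-- the lower quantization dimension `D̲_r(μ)`. -/
def lowerQD {E : Type*} [PseudoMetricSpace E] [MeasurableSpace E] (r : ℝ)
    (μ : Measure E) : ℝ :=
  liminf (fun k : ℕ => Real.log k / (-Real.log (quantErr r μ k ^ (1 / r)))) atTop

/-- spectral radius of a real matrix: the largest modulus of a complex eigenvalue. -/
def specRad {n : Type*} [Fintype n] [DecidableEq n] (M : Matrix n n ℝ) : ℝ :=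
  sSup (norm '' spectrum ℂ (M.map (algebraMap ℝ ℂ)))

/-- `A₁(s) = ((p_{i,j} s_{i,j}^r)^s)_{i,j=1}^N`. -/
def matA1 (p sr : ℕ → ℕ → ℝ) (N : ℕ) (r s : ℝ) : Matrix (Fin N) (Fin N) ℝ :=
  Matrix.of fun i j => (p (i.1 + 1) (j.1 + 1) * sr (i.1 + 1) (j.1 + 1) ^ r) ^ s

/-- `A₂(s) = ((p_{i⁺,j⁺} s_{i⁺,j⁺}^r)^s)_{i,j=1}^N`. -/
def matA2 (p sr : ℕ → ℕ → ℝ) (N : ℕ) (r s : ℝ) : Matrix (Fin N) (Fin N) ℝ :=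
  Matrix.of fun i j => (p (i.1 + 1 + N) (j.1 + 1 + N) * sr (i.1 + 1 + N) (j.1 + 1 + N) ^ r) ^ s

/-- `A₃(s) = ((p_{i,j⁺} s_{i,j⁺}^r)^s)_{i,j=1}^N`. -/
def matA3 (p sr : ℕ → ℕ → ℝ) (N : ℕ) (r s : ℝ) : Matrix (Fin N) (Fin N) ℝ :=
  Matrix.of fun i j => (p (i.1 + 1) (j.1 + 1 + N) * sr (i.1 + 1) (j.1 + 1 + N) ^ r) ^ s

/-- `A₄(s) = ((p_{i⁺,j} s_{i⁺,j}^r)^s)_{i,j=1}^N`. -/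
def matA4 (p sr : ℕ → ℕ → ℝ) (N : ℕ) (r s : ℝ) : Matrix (Fin N) (Fin N) ℝ :=
  Matrix.of fun i j => (p (i.1 + 1 + N) (j.1 + 1) * sr (i.1 + 1 + N) (j.1 + 1) ^ r) ^ s

/-- the block matrix `A(s) = [[A₁(s), A₃(s)], [A₄(s), A₂(s)]]`. -/
def matA (p sr : ℕ → ℕ → ℝ) (N : ℕ) (r s : ℝ) :
    Matrix (Fin N ⊕ Fin N) (Fin N ⊕ Fin N) ℝ :=
  Matrix.fromBlocks (matA1 p sr N r s) (matA3 p sr N r s) (matA4 p sr N r s) (matA2 p sr N r s)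

/-- `p̲ = min_{(i,j) ∈ G₂} p_{i,j}`. -/
def pMin (p : ℕ → ℕ → ℝ) (N : ℕ) : ℝ :=
  sInf {x | ∃ i ∈ Finset.Icc 1 (2 * N), ∃ j ∈ Finset.Icc 1 (2 * N), 0 < p i j ∧ x = p i j}

/-- `p̄ = max_{(i,j) ∈ G₂} p_{i,j}`. -/
def pMax (p : ℕ → ℕ → ℝ) (N : ℕ) : ℝ :=
  sSup {x | ∃ i ∈ Finset.Icc 1 (2 * N), ∃ j ∈ Finset.Icc 1 (2 * N), 0 < p i j ∧ x = p i j}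

/-- `s̲ = min_{(i,j) ∈ 𝒮₂} s_{i,j}`. -/
def sMin (p sr : ℕ → ℕ → ℝ) (N : ℕ) : ℝ :=
  sInf {x | ∃ i ∈ Finset.Icc 1 N, ∃ j ∈ Finset.Icc 1 N, isSword p N [i, j] ∧ x = sr i j}

/-- `s̄ = max_{(i,j) ∈ 𝒮₂} s_{i,j}`. -/
def sMax (p sr : ℕ → ℕ → ℝ) (N : ℕ) : ℝ :=
  sSup {x | ∃ i ∈ Finset.Icc 1 N, ∃ j ∈ Finset.Icc 1 N, isSword p N [i, j] ∧ x = sr i j}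

/-- `χ̲ = min_{1 ≤ i ≤ 2N} χ_i`. -/
def chiMin (χ : ℕ → ℝ) (N : ℕ) : ℝ := sInf {x | ∃ i ∈ Finset.Icc 1 (2 * N), x = χ i}

/-- `χ̄ = max_{1 ≤ i ≤ 2N} χ_i`. -/
def chiMax (χ : ℕ → ℝ) (N : ℕ) : ℝ := sSup {x | ∃ i ∈ Finset.Icc 1 (2 * N), x = χ i}

/-- `t` satisfies the defining property of `t_r`:
`(1/n) log Σ_{σ ∈ 𝒮_n} ℰ_r(σ)^{t/(t+r)} → 0`. -/
def trCond (p : ℕ → ℕ → ℝ) (χ : ℕ → ℝ) (sr : ℕ → ℕ → ℝ) (N : ℕ) (r t : ℝ) : Prop :=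
  0 < t ∧
    Tendsto (fun n : ℕ => (n : ℝ)⁻¹ *
      Real.log (∑ σ ∈ Sn p N n, Er p χ sr N r σ ^ (t / (t + r)))) atTop (nhds 0)

/-- the initial word of length `n` of an infinite sequence. -/
def seqTake (x : ℕ → ℕ) (n : ℕ) : List ℕ := (List.range n).map x

/-- `Γ` is a finite maximal antichain among the words satisfying `W`, with respect to the
infinite sequences satisfying `Wseq`. -/
def isMaxAntichain (W : List ℕ → Prop) (Wseq : (ℕ → ℕ) → Prop) (Γ : Finset (List ℕ)) : Prop :=
  (∀ σ ∈ Γ, W σ) ∧ (∀ σ ∈ Γ, ∀ τ ∈ Γ, σ ≠ τ → ¬σ <+: τ) ∧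
    ∀ x : ℕ → ℕ, Wseq x → ∃ n : ℕ, 1 ≤ n ∧ seqTake x n ∈ Γ

/-- infinite admissible sequences with letters in `Ψ`. -/
def isH1seq (p : ℕ → ℕ → ℝ) (N : ℕ) (x : ℕ → ℕ) : Prop :=
  (∀ n, x n ∈ Finset.Icc 1 N) ∧ ∀ n, 0 < p (x n) (x (n + 1))

/-- infinite admissible sequences with letters in `Υ`. -/
def isH2seq (p : ℕ → ℕ → ℝ) (N : ℕ) (x : ℕ → ℕ) : Prop :=
  (∀ n, x n ∈ Finset.Icc (N + 1) (2 * N)) ∧ ∀ n, 0 < p (x n) (x (n + 1))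

/-- minimal length of a word in `Γ`. -/
def minLen (Γ : Finset (List ℕ)) : ℕ := sInf {n | ∃ σ ∈ Γ, σ.length = n}

/-- maximal length of a word in `Γ`. -/
def maxLen (Γ : Finset (List ℕ)) : ℕ := sSup {n | ∃ σ ∈ Γ, σ.length = n}

/-- `Λ_{k,r} = {σ ∈ 𝒮^* : ℰ_r(σ) < c₁^k ≤ ℰ_r(σ^♭)}`. -/
def LamSet (p : ℕ → ℕ → ℝ) (χ : ℕ → ℝ) (sr : ℕ → ℕ → ℝ) (N : ℕ) (r c1 : ℝ) (k : ℕ) :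
    Set (List ℕ) :=
  {σ | isSword p N σ ∧ Er p χ sr N r σ < c1 ^ k ∧ c1 ^ k ≤ Er p χ sr N r σ.dropLast}

/-- `ℒ(σ) = {σ, σ⁺} ∪ {σ|_h ∗ (σ_{h+1}⁺, …, σ_n⁺) : 1 ≤ h ≤ n − 1}`. -/
def Lset (N : ℕ) (σ : List ℕ) : Finset (List ℕ) :=
  (Finset.range (σ.length + 1)).image fun h =>
    σ.take h ++ (σ.drop h).map (fun x => x + N)

section
variable {N : ℕ} {p sr : ℕ → ℕ → ℝ}

lemma length_of_mem_lifts : ∀ {σ τ : List ℕ}, τ ∈ lifts N σ → τ.length = σ.length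
  | [], τ, h => by simp [lifts] at h; simp [h]
  | i :: t, τ, h => by
    simp only [lifts, Finset.mem_biUnion, Finset.mem_insert, Finset.mem_singleton] at h
    obtain ⟨l, hl, h | h⟩ := h <;> subst h <;> simp [length_of_mem_lifts hl]

lemma mem_lifts_cons {i : ℕ} {t τ : List ℕ} :
    τ ∈ lifts N (i :: t) ↔ ∃ l ∈ lifts N t, τ = i :: l ∨ τ = (i + N) :: l := by
  simp [lifts, Finset.mem_biUnion]

lemma lifts_append (j : ℕ) : ∀ σ : List ℕ, lifts N (σ ++ [j]) =
    (lifts N σ).biUnion (fun l => {l ++ [j], l ++ [j + N]})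
  | [] => by simp [lifts]
  | i :: t => by
    show lifts N (i :: (t ++ [j])) = _
    rw [lifts, lifts_append j t, Finset.biUnion_biUnion, lifts]
    rw [Finset.biUnion_biUnion]
    apply Finset.biUnion_congr rfl
    intro l _
    ext x
    simp only [Finset.mem_biUnion, Finset.mem_insert, Finset.mem_singleton]
    constructor <;> rintro ⟨a, rfl | rfl, rfl | rfl⟩ <;>
      first
        | exact ⟨i :: l, Or.inl rfl, Or.inl rfl⟩
        | exact ⟨i :: l, Or.inl rfl, Or.inr rfl⟩
        | exact ⟨(i + N) :: l, Or.inr rfl, Or.inl rfl⟩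
        | exact ⟨(i + N) :: l, Or.inr rfl, Or.inr rfl⟩
        | exact ⟨l ++ [j], Or.inl rfl, Or.inl rfl⟩
        | exact ⟨l ++ [j], Or.inl rfl, Or.inr rfl⟩
        | exact ⟨l ++ [j + N], Or.inr rfl, Or.inl rfl⟩
        | exact ⟨l ++ [j + N], Or.inr rfl, Or.inr rfl⟩

lemma pword_concat : ∀ {l : List ℕ}, l ≠ [] → ∀ b : ℕ,
    pword p (l ++ [b]) = pword p l * p (l.getLastD 0) b
  | [], h, b => absurd rfl h
  | [a], _, b => by simp [pword]
  | a :: c :: t, _, b => by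
    have ih := pword_concat (l := c :: t) (by simp) b
    show pword p (a :: c :: (t ++ [b])) = _
    rw [pword, show c :: (t ++ [b]) = (c :: t) ++ [b] from rfl, ih, pword]
    simp [List.getLastD_cons, mul_assoc]

lemma sword_concat : ∀ {l : List ℕ}, l ≠ [] → ∀ b : ℕ,
    sword sr (l ++ [b]) = sword sr l * sr (l.getLastD 0) b
  | [], h, b => absurd rfl h
  | [a], _, b => by simp [sword]
  | a :: c :: t, _, b => by
    have ih := sword_concat (l := c :: t) (by simp) b
    show sword sr (a :: c :: (t ++ [b])) = _
    rw [sword, show c :: (t ++ [b]) = (c :: t) ++ [b] from rfl, ih, sword]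
    simp [List.getLastD_cons, mul_assoc]

lemma chain'_concat {l : List ℕ} (hl : l ≠ []) (b : ℕ) :
    (l ++ [b]).Chain' (edge p) ↔ l.Chain' (edge p) ∧ 0 < p (l.getLastD 0) b := by
  obtain ⟨t, a, rfl⟩ : ∃ t a, l = t ++ [a] := by
    rcases l.eq_nil_or_concat with h | ⟨L, c, h⟩
    · exact absurd h hl
    · exact ⟨L, c, by simpa using h⟩
  simp only [List.Chain']
  rw [List.isChain_append]
  simp [edge]

lemma getLastD_of_mem_lifts {σ τ : List ℕ} (hσ : σ ≠ []) (h : τ ∈ lifts N σ) :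
    τ.getLastD 0 = σ.getLastD 0 ∨ τ.getLastD 0 = σ.getLastD 0 + N := by
  obtain ⟨t, a, rfl⟩ : ∃ t a, σ = t ++ [a] := by
    rcases σ.eq_nil_or_concat with h' | ⟨L, c, h'⟩
    · exact absurd h' hσ
    · exact ⟨L, c, by simpa using h'⟩
  rw [lifts_append] at h
  simp only [Finset.mem_biUnion, Finset.mem_insert, Finset.mem_singleton] at h
  obtain ⟨l, _, rfl | rfl⟩ := h <;> simp

lemma headD_of_mem_lifts {σ τ : List ℕ} (hσ : σ ≠ []) (h : τ ∈ lifts N σ) :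
    τ.headD 0 = σ.headD 0 ∨ τ.headD 0 = σ.headD 0 + N := by
  cases σ with
  | nil => exact absurd rfl hσ
  | cons i t =>
    rw [mem_lifts_cons] at h
    obtain ⟨l, _, rfl | rfl⟩ := h <;> simp

lemma pword_nonneg (hp0 : ∀ i j, 0 ≤ p i j) : ∀ l : List ℕ, 0 ≤ pword p l
  | [] => by simp [pword]
  | [_] => by simp [pword]
  | a :: b :: t => by
    rw [pword]; exact mul_nonneg (hp0 a b) (pword_nonneg hp0 (b :: t))

lemma headD_append {l : List ℕ} (hl : l ≠ []) (b : ℕ) : (l ++ [b]).headD 0 = l.headD 0 := by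
  cases l with
  | nil => exact absurd rfl hl
  | cons a t => rfl

lemma muJ_concat (hN : 0 < N) (hp0 : ∀ i j, 0 ≤ p i j) {χ : ℕ → ℝ} {σ : List ℕ}
    (hσ : σ ≠ []) (j : ℕ) :
    muJ p χ N (σ ++ [j]) = ∑ τ ∈ Gam p N σ,
      χ (τ.headD 0) * pword p τ * (p (τ.getLastD 0) j + p (τ.getLastD 0) (j + N)) := by
  have hdisj : ∀ x ∈ lifts N σ, ∀ y ∈ lifts N σ, x ≠ y →
      Disjoint ({x ++ [j], x ++ [j + N]} : Finset (List ℕ)) {y ++ [j], y ++ [j + N]} := by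
    intro x hx y hy hxy
    have hlen : x.length = y.length := by
      rw [length_of_mem_lifts hx, length_of_mem_lifts hy]
    rw [Finset.disjoint_left]
    intro a ha ha'
    simp only [Finset.mem_insert, Finset.mem_singleton] at ha ha'
    rcases ha with rfl | rfl <;> rcases ha' with h | h <;>
      exact hxy (List.append_inj h hlen).1
  unfold muJ Gam
  rw [lifts_append, Finset.sum_filter, Finset.sum_biUnion hdisj, Finset.sum_filter]
  apply Finset.sum_congr rfl
  intro l hl
  have hlne : l ≠ [] := by
    intro h
    rw [h] at hl
    have := length_of_mem_lifts hl
    exact hσ (List.length_eq_zero_iff.mp (by simpa using this.symm))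
  have hzero : ∀ b : ℕ, ¬ 0 < p (l.getLastD 0) b → p (l.getLastD 0) b = 0 :=
    fun b h => le_antisymm (not_lt.mp h) (hp0 _ _)
  rw [Finset.sum_pair (by
    intro h
    have := (List.append_inj' h rfl).2
    simp only [List.cons.injEq, and_true] at this
    omega)]
  have key : ∀ b : ℕ,
      (if List.Chain' (edge p) (l ++ [b]) then
        χ ((l ++ [b]).headD 0) * pword p (l ++ [b]) else 0)
      = (if List.Chain' (edge p) l then χ (l.headD 0) * pword p l else 0)
          * p (l.getLastD 0) b := by
    intro b
    rw [headD_append hlne, pword_concat hlne]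
    by_cases hc : List.Chain' (edge p) (l ++ [b])
    · rw [if_pos hc]
      obtain ⟨hcl, _⟩ := (chain'_concat hlne b).mp hc
      rw [if_pos hcl]; ring
    · rw [if_neg hc]
      by_cases hcl : List.Chain' (edge p) l
      · have hnp : ¬ 0 < p (l.getLastD 0) b :=
          fun hpb => hc ((chain'_concat hlne b).mpr ⟨hcl, hpb⟩)
        rw [if_pos hcl, hzero b hnp, mul_zero]
      · rw [if_neg hcl, zero_mul]
  rw [key j, key (j + N)]
  split_ifs <;> ring

lemma muJ_singleton (hN : 0 < N) {χ : ℕ → ℝ} (i : ℕ) : muJ p χ N [i] = χ i + χ (i + N) := by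
  have h1 : lifts N [i] = {[i], [i + N]} := by
    rw [show ([i] : List ℕ) = [] ++ [i] from rfl, lifts_append]
    simp [lifts]
  unfold muJ Gam
  rw [h1]
  have h2 : ∀ x : ℕ, ([x] : List ℕ).Chain' (edge p) := fun x => List.isChain_singleton x
  rw [Finset.filter_true_of_mem (by
    intro x hx
    simp only [Finset.mem_insert, Finset.mem_singleton] at hx
    rcases hx with rfl | rfl <;> exact h2 _)]
  rw [Finset.sum_pair (by simp; omega)]
  simp [pword]

lemma edge_pattern (hA : (A1 p N ∧ A2 p N ∧ A3 p N) ∨ (A2 p N ∧ A4 p N ∧ A5 p N))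
    {i j a b : ℕ} (hi : i ∈ Finset.Icc 1 N) (hj : j ∈ Finset.Icc 1 N)
    (ha : a = i ∨ a = i + N) (hb : b = j ∨ b = j + N) (hpab : 0 < p a b) :
    0 < p i j ∧ 0 < p (i + N) (j + N) := by
  rcases hA with ⟨_, _, h3⟩ | ⟨_, h4, _⟩
  · rcases h3 i hi j hj with ⟨z1, z2, z3, z4⟩ | ⟨q1, _, _, q4⟩
    · exfalso
      rcases ha with rfl | rfl <;> rcases hb with rfl | rfl <;>
        simp_all
    · exact ⟨q1, q4⟩
  · rcases h4 i hi j hj with ⟨z1, z2, z3, z4⟩ | ⟨q1, _, _, q4⟩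
    · exfalso
      rcases ha with rfl | rfl <;> rcases hb with rfl | rfl <;>
        simp_all
    · exact ⟨q1, q4⟩

lemma isSword_pair {i j : ℕ} (hi : i ∈ Finset.Icc 1 N) (hj : j ∈ Finset.Icc 1 N)
    (hij : 0 < p i j) : isSword p N [i, j] := by
  refine ⟨⟨by simp, ?_⟩, ⟨[i, j], ?_⟩⟩
  · intro x hx
    simp only [List.mem_cons, List.not_mem_nil, or_false] at hx
    rcases hx with rfl | rfl
    exacts [hi, hj]
  · rw [Gam, Finset.mem_filter]
    constructor
    · rw [mem_lifts_cons]
      refine ⟨[j], ?_, Or.inl rfl⟩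
      rw [mem_lifts_cons]
      exact ⟨[], by simp [lifts], Or.inl rfl⟩
    · exact List.isChain_pair.mpr hij

lemma isSword_cons (hA : (A1 p N ∧ A2 p N ∧ A3 p N) ∨ (A2 p N ∧ A4 p N ∧ A5 p N))
    {a b : ℕ} {t : List ℕ} (h : isSword p N (a :: b :: t)) :
    isSword p N (b :: t) ∧ 0 < p a b := by
  obtain ⟨⟨_, hmem⟩, τ, hτ⟩ := h
  rw [Gam, Finset.mem_filter] at hτ
  obtain ⟨hτl, hτc⟩ := hτ
  rw [mem_lifts_cons] at hτl
  obtain ⟨l, hl, rfl | rfl⟩ := hτl <;>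
  · obtain ⟨l', hl', hy⟩ := mem_lifts_cons.mp hl
    have hctail : l.Chain' (edge p) := hτc.tail
    have hedge : 0 < p a b := by
      have hhd := List.isChain_cons.mp hτc
      rcases hy with rfl | rfl <;>
      · have he : edge p _ _ := List.isChain_cons_cons.mp hτc |>.1
        exact (edge_pattern hA (hmem a (by simp)) (hmem b (by simp))
          (by omega) (by omega) he).1
    refine ⟨⟨⟨by simp, fun x hx => hmem x (List.mem_cons_of_mem _ hx)⟩,
      ⟨l, ?_⟩⟩, hedge⟩
    rw [Gam, Finset.mem_filter]
    exact ⟨hl, hctail⟩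

lemma sword_bounds
    (hsim : ∀ i ∈ Finset.Icc 1 N, ∀ j ∈ Finset.Icc 1 N, isSword p N [i, j] →
      0 < sr i j ∧ sr i j < 1)
    (hA : (A1 p N ∧ A2 p N ∧ A3 p N) ∨ (A2 p N ∧ A4 p N ∧ A5 p N)) :
    ∀ {σ : List ℕ}, isSword p N σ → 0 < sword sr σ ∧ sword sr σ ≤ 1
  | [], h => absurd rfl h.1.1
  | [a], _ => by simp [sword]
  | a :: b :: t, h => by
    obtain ⟨h1, h2⟩ := isSword_cons hA h
    have ha : a ∈ Finset.Icc 1 N := h.1.2 a (by simp)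
    have hb : b ∈ Finset.Icc 1 N := h.1.2 b (by simp)
    have hs := hsim a ha b hb (isSword_pair ha hb h2)
    have ih := sword_bounds hsim hA h1
    rw [sword]
    exact ⟨mul_pos hs.1 ih.1,
      mul_le_one₀ hs.2.le ih.1.le ih.2⟩

end

set_option maxHeartbeats 2000000 in
/-- **Lemma 3.1.** Assume (A1)–(A3), or (A2), (A4), (A5). There exist constants
`c_{1,r}, c_{2,r} ∈ (0,1)` with `c_{1,r} ℰ_r(σ^♭) ≤ ℰ_r(σ) ≤ c_{2,r} ℰ_r(σ^♭)` for every
`σ ∈ 𝒮^*`. -/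
theorem stmt12
    (N q : ℕ) (hN : 2 ≤ N) (hq : 1 ≤ q) (r : ℝ) (hr : 0 < r)
    (p : ℕ → ℕ → ℝ) (χ : ℕ → ℝ)
    (hp0 : ∀ i j, 0 ≤ p i j)
    (hpsupp : ∀ i j, 0 < p i j → i ∈ Finset.Icc 1 (2 * N) ∧ j ∈ Finset.Icc 1 (2 * N))
    (hpsum : ∀ i ∈ Finset.Icc 1 (2 * N), ∑ j ∈ Finset.Icc 1 (2 * N), p i j = 1)
    (hχpos : ∀ i ∈ Finset.Icc 1 (2 * N), 0 < χ i)
    (hχsum : ∑ i ∈ Finset.Icc 1 (2 * N), χ i = 1)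
    (sr : ℕ → ℕ → ℝ)
    (T : ℕ → ℕ → EuclideanSpace ℝ (Fin q) → EuclideanSpace ℝ (Fin q))
    (J : ℕ → Set (EuclideanSpace ℝ (Fin q)))
    (hTinv : ∀ i ∈ Finset.Icc 1 N, ∀ j ∈ Finset.Icc 1 N, ∀ a b : ℕ,
      (a = i ∨ a = i + N) → (b = j ∨ b = j + N) → 0 < p a b →
      T a b = T i j ∧ sr a b = sr i j)
    (hsim : ∀ i ∈ Finset.Icc 1 N, ∀ j ∈ Finset.Icc 1 N, isSword p N [i, j] →
      0 < sr i j ∧ sr i j < 1 ∧ ∀ x y, dist (T i j x) (T i j y) = sr i j * dist x y)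
    (hJcpt : ∀ i ∈ Finset.Icc 1 N,
      IsCompact (J i) ∧ (J i).Nonempty ∧ closure (interior (J i)) = J i ∧
        Metric.diam (J i) = 1)
    (hJdisj : ∀ i ∈ Finset.Icc 1 N, ∀ j ∈ Finset.Icc 1 N, i ≠ j → Disjoint (J i) (J j))
    (hJplus : ∀ i ∈ Finset.Icc 1 N, J (i + N) = J i)
    (hnest : ∀ i ∈ Finset.Icc 1 N, ∀ j ∈ Finset.Icc 1 N, isSword p N [i, j] →
      T i j '' J j ⊆ J i)
    (hTdisj : ∀ i ∈ Finset.Icc 1 N, ∀ j ∈ Finset.Icc 1 N, ∀ l ∈ Finset.Icc 1 N,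
      isSword p N [i, j] → isSword p N [i, l] → j ≠ l →
      Disjoint (T i j '' J j) (T i l '' J l))
    (hA : (A1 p N ∧ A2 p N ∧ A3 p N) ∨ (A2 p N ∧ A4 p N ∧ A5 p N)) :
    ∃ c1 ∈ Set.Ioo (0 : ℝ) 1, ∃ c2 ∈ Set.Ioo (0 : ℝ) 1,
      ∀ σ : List ℕ, isSword p N σ →
        c1 * Er p χ sr N r σ.dropLast ≤ Er p χ sr N r σ ∧
          Er p χ sr N r σ ≤ c2 * Er p χ sr N r σ.dropLast := by
  classical
  have hN0 : 0 < N := by omega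
  have h1memN : (1 : ℕ) ∈ Finset.Icc 1 N := by simp [Finset.mem_Icc]; omega
  have hA2 : A2 p N := hA.elim (fun h => h.2.1) (fun h => h.1)
  have hsim' : ∀ i ∈ Finset.Icc 1 N, ∀ j ∈ Finset.Icc 1 N, isSword p N [i, j] →
      0 < sr i j ∧ sr i j < 1 :=
    fun i hi j hj hs => ⟨(hsim i hi j hj hs).1, (hsim i hi j hj hs).2.1⟩
  obtain ⟨j0, hj0, hpj0⟩ : ∃ j ∈ Finset.Icc 1 N, 0 < p 1 j := by
    have h2 := (hA2 1 h1memN).1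
    obtain ⟨j, hj⟩ := Finset.card_pos.mp (by omega :
      0 < ((Finset.Icc 1 N).filter fun j => 0 < p 1 j).card)
    exact ⟨j, (Finset.mem_filter.mp hj).1, (Finset.mem_filter.mp hj).2⟩
  have hIccN : ∀ x : ℕ, x ∈ Finset.Icc 1 N → x ∈ Finset.Icc 1 (2 * N) := by
    intro x hx; simp [Finset.mem_Icc] at *; omega
  have hIccNp : ∀ x : ℕ, x ∈ Finset.Icc 1 N → x + N ∈ Finset.Icc 1 (2 * N) := by
    intro x hx; simp [Finset.mem_Icc] at *; omega
  -- the minimal positive transition probability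
  set S2 : Finset (ℕ × ℕ) := ((Finset.Icc 1 (2 * N)) ×ˢ (Finset.Icc 1 (2 * N))).filter
      (fun ab => 0 < p ab.1 ab.2) with hS2def
  have hS2ne : (S2.image fun ab => p ab.1 ab.2).Nonempty := by
    refine ⟨p 1 j0, Finset.mem_image.mpr ⟨(1, j0), ?_, rfl⟩⟩
    rw [hS2def, Finset.mem_filter, Finset.mem_product]
    exact ⟨⟨hIccN 1 h1memN, hIccN j0 hj0⟩, hpj0⟩
  set pm : ℝ := (S2.image fun ab => p ab.1 ab.2).min' hS2ne with hpmdef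
  have hpm_le : ∀ a b : ℕ, a ∈ Finset.Icc 1 (2 * N) → b ∈ Finset.Icc 1 (2 * N) →
      0 < p a b → pm ≤ p a b := by
    intro a b ha hb hp
    refine Finset.min'_le _ _ (Finset.mem_image.mpr ⟨(a, b), ?_, rfl⟩)
    rw [hS2def, Finset.mem_filter, Finset.mem_product]
    exact ⟨⟨ha, hb⟩, hp⟩
  have hpm_pos : 0 < pm := by
    obtain ⟨ab, hab, heq⟩ := Finset.mem_image.mp ((S2.image fun ab => p ab.1 ab.2).min'_mem hS2ne)
    rw [hS2def, Finset.mem_filter] at hab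
    rw [hpmdef, ← heq]
    exact hab.2
  -- the minimal contraction ratio
  set SP : Finset (ℕ × ℕ) := ((Finset.Icc 1 N) ×ˢ (Finset.Icc 1 N)).filter
      (fun ab => 0 < p ab.1 ab.2) with hSPdef
  have hSPne : (SP.image fun ab => sr ab.1 ab.2).Nonempty := by
    refine ⟨sr 1 j0, Finset.mem_image.mpr ⟨(1, j0), ?_, rfl⟩⟩
    rw [hSPdef, Finset.mem_filter, Finset.mem_product]
    exact ⟨⟨h1memN, hj0⟩, hpj0⟩
  set smn : ℝ := (SP.image fun ab => sr ab.1 ab.2).min' hSPne with hsmndef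
  have hsmn_le : ∀ a b : ℕ, a ∈ Finset.Icc 1 N → b ∈ Finset.Icc 1 N →
      0 < p a b → smn ≤ sr a b := by
    intro a b ha hb hp
    refine Finset.min'_le _ _ (Finset.mem_image.mpr ⟨(a, b), ?_, rfl⟩)
    rw [hSPdef, Finset.mem_filter, Finset.mem_product]
    exact ⟨⟨ha, hb⟩, hp⟩
  have hsmn_pos : 0 < smn := by
    obtain ⟨ab, hab, heq⟩ := Finset.mem_image.mp ((SP.image fun ab => sr ab.1 ab.2).min'_mem hSPne)
    rw [hSPdef, Finset.mem_filter, Finset.mem_product] at hab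
    rw [hsmndef, ← heq]
    exact (hsim' ab.1 hab.1.1 ab.2 hab.1.2 (isSword_pair hab.1.1 hab.1.2 hab.2)).1
  -- the minimal weight
  have hχne : ((Finset.Icc 1 (2 * N)).image χ).Nonempty :=
    ⟨χ 1, Finset.mem_image.mpr ⟨1, hIccN 1 h1memN, rfl⟩⟩
  set χm : ℝ := ((Finset.Icc 1 (2 * N)).image χ).min' hχne with hχmdef
  have hχm_le : ∀ i ∈ Finset.Icc 1 (2 * N), χm ≤ χ i := fun i hi =>
    Finset.min'_le _ _ (Finset.mem_image.mpr ⟨i, hi, rfl⟩)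
  have hχm_pos : 0 < χm := by
    obtain ⟨i, hi, heq⟩ := Finset.mem_image.mp (((Finset.Icc 1 (2 * N)).image χ).min'_mem hχne)
    rw [hχmdef, ← heq]
    exact hχpos i hi
  -- three-point sum bound
  have htriple : ∀ a ∈ Finset.Icc 1 (2 * N), ∀ x y z : ℕ,
      x ∈ Finset.Icc 1 (2 * N) → y ∈ Finset.Icc 1 (2 * N) → z ∈ Finset.Icc 1 (2 * N) →
      x ≠ y → x ≠ z → y ≠ z → p a x + p a y + p a z ≤ 1 := by
    intro a ha x y z hx hy hz hxy hxz hyz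
    have hsub : ({x, y, z} : Finset ℕ) ⊆ Finset.Icc 1 (2 * N) := by
      intro w hw
      simp only [Finset.mem_insert, Finset.mem_singleton] at hw
      rcases hw with rfl | rfl | rfl <;> assumption
    have hexp : ∑ b ∈ ({x, y, z} : Finset ℕ), p a b = p a x + p a y + p a z := by
      rw [Finset.sum_insert (by simp [hxy, hxz]), Finset.sum_insert (by simp [hyz]),
        Finset.sum_singleton, add_assoc]
    calc p a x + p a y + p a z = ∑ b ∈ ({x, y, z} : Finset ℕ), p a b := hexp.symm
      _ ≤ ∑ b ∈ Finset.Icc 1 (2 * N), p a b :=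
        Finset.sum_le_sum_of_subset_of_nonneg hsub (fun w _ _ => hp0 a w)
      _ = 1 := hpsum a ha
  -- row bound
  have hrow : ∀ a j : ℕ, a ∈ Finset.Icc 1 (2 * N) → j ∈ Finset.Icc 1 N →
      p a j + p a (j + N) ≤ 1 - pm := by
    intro a j ha hj
    obtain ⟨c, hc, hcj, hcjN, hpc⟩ : ∃ c, c ∈ Finset.Icc 1 (2 * N) ∧ c ≠ j ∧ c ≠ j + N ∧
        0 < p a c := by
      by_cases haN : a ≤ N
      · have haΨ : a ∈ Finset.Icc 1 N := by simp [Finset.mem_Icc] at *; omega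
        have h2 := (hA2 a haΨ).1
        obtain ⟨c1, hc1, c2, hc2, hne⟩ := Finset.one_lt_card.mp (lt_of_lt_of_le one_lt_two h2)
        simp only [Finset.mem_filter, Finset.mem_Icc] at hc1 hc2
        simp only [Finset.mem_Icc] at hj
        rcases eq_or_ne c1 j with rfl | hne1
        · exact ⟨c2, by simp [Finset.mem_Icc]; omega, by omega, by omega, hc2.2⟩
        · exact ⟨c1, by simp [Finset.mem_Icc]; omega, hne1, by omega, hc1.2⟩
      · have hiΨ : a - N ∈ Finset.Icc 1 N := by simp [Finset.mem_Icc] at *; omega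
        have h2 := (hA2 (a - N) hiΨ).2
        obtain ⟨c1, hc1, c2, hc2, hne⟩ := Finset.one_lt_card.mp (lt_of_lt_of_le one_lt_two h2)
        simp only [Finset.mem_filter, Finset.mem_Icc] at hc1 hc2
        simp only [Finset.mem_Icc] at hj
        have haa : a - N + N = a := by omega
        rw [haa] at hc1 hc2
        rcases eq_or_ne c1 j with rfl | hne1
        · exact ⟨c2 + N, by simp [Finset.mem_Icc]; omega, by omega, by omega, hc2.2⟩
        · exact ⟨c1 + N, by simp [Finset.mem_Icc]; omega, by omega, by omega, hc1.2⟩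
    have h3 := htriple a ha j (j + N) c (hIccN j hj) (hIccNp j hj) hc
      (by simp [Finset.mem_Icc] at hj ⊢; omega) (Ne.symm hcj) (Ne.symm hcjN)
    have := hpm_le a c ha hc hpc
    linarith
  have hpm_lt1 : pm < 1 := by
    have h1 := hrow 1 j0 (hIccN 1 h1memN) hj0
    have h2 := hpm_le 1 j0 (hIccN 1 h1memN) (hIccN j0 hj0) hpj0
    have h3 := hp0 1 (j0 + N)
    linarith
  have hχm_lt1 : χm < 1 := by
    have h1 : (1 : ℕ) ∈ Finset.Icc 1 (2 * N) := hIccN 1 h1memN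
    have h2 : (2 : ℕ) ∈ Finset.Icc 1 (2 * N) := by simp [Finset.mem_Icc]; omega
    have hsub : ({1, 2} : Finset ℕ) ⊆ Finset.Icc 1 (2 * N) := by
      intro w hw
      simp only [Finset.mem_insert, Finset.mem_singleton] at hw
      rcases hw with rfl | rfl <;> assumption
    have hsum : χ 1 + χ 2 ≤ 1 := by
      calc χ 1 + χ 2 = ∑ i ∈ ({1, 2} : Finset ℕ), χ i := by
            rw [Finset.sum_insert (by simp), Finset.sum_singleton]
        _ ≤ ∑ i ∈ Finset.Icc 1 (2 * N), χ i :=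
          Finset.sum_le_sum_of_subset_of_nonneg hsub (fun w hw _ => (hχpos w hw).le)
        _ = 1 := hχsum
    have := hχm_le 1 h1
    have := hχpos 2 h2
    linarith
  -- the constants
  refine ⟨min χm (pm * smn ^ r), ⟨lt_min hχm_pos (mul_pos hpm_pos (Real.rpow_pos_of_pos hsmn_pos r)),
      lt_of_le_of_lt (min_le_left _ _) hχm_lt1⟩,
    1 - min pm χm, ⟨by have := min_le_right pm χm; linarith,
      by have := lt_min hpm_pos hχm_pos; linarith⟩, ?_⟩
  intro σ hσ
  obtain ⟨t, j, rfl⟩ : ∃ t j, σ = t ++ [j] := by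
    rcases σ.eq_nil_or_concat with h | ⟨L, b, h⟩
    · exact absurd h hσ.1.1
    · exact ⟨L, b, by simpa using h⟩
  have hj : j ∈ Finset.Icc 1 N := hσ.1.2 j (by simp)
  have hdrop : (t ++ [j]).dropLast = t := by simp
  rcases eq_or_ne t [] with rfl | htne
  · -- singleton case
    simp only [List.nil_append] at hσ hdrop ⊢
    have hEr : Er p χ sr N r [j] = χ j + χ (j + N) := by
      rw [Er, if_neg (by simp), muJ_singleton hN0]
      show (χ j + χ (j + N)) * sword sr [j] ^ r = _
      rw [show sword sr [j] = 1 from rfl, Real.one_rpow, mul_one]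
    rw [hdrop, hEr, Er, if_pos rfl, mul_one]
    have h1 := hχm_le j (hIccN j hj)
    have h2 := hχpos (j + N) (hIccNp j hj)
    constructor
    · have := min_le_left χm (pm * smn ^ r)
      linarith
    · -- upper bound
      have hj' : (if j = 1 then 2 else 1) ∈ Finset.Icc 1 (2 * N) ∧ (if j = 1 then 2 else 1) ≠ j ∧
          (if j = 1 then 2 else 1) ≠ j + N := by
        simp only [Finset.mem_Icc] at hj ⊢
        split <;> omega
      obtain ⟨hj'1, hj'2, hj'3⟩ := hj'
      have hsub : ({j, j + N, if j = 1 then 2 else 1} : Finset ℕ) ⊆ Finset.Icc 1 (2 * N) := by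
        intro w hw
        simp only [Finset.mem_insert, Finset.mem_singleton] at hw
        rcases hw with h | h | h <;> rw [h]
        exacts [hIccN j hj, hIccNp j hj, hj'1]
      have hexp : ∑ i ∈ ({j, j + N, if j = 1 then 2 else 1} : Finset ℕ), χ i
          = χ j + χ (j + N) + χ (if j = 1 then 2 else 1) := by
        rw [Finset.sum_insert (by
            simp only [Finset.mem_insert, Finset.mem_singleton]
            push_neg
            exact ⟨by simp [Finset.mem_Icc] at hj; omega, Ne.symm hj'2⟩),
          Finset.sum_insert (by simpa using Ne.symm hj'3), Finset.sum_singleton, add_assoc]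
      have hsum : χ j + χ (j + N) + χ (if j = 1 then 2 else 1) ≤ 1 := by
        rw [← hexp, ← hχsum]
        exact Finset.sum_le_sum_of_subset_of_nonneg hsub (fun w hw _ => (hχpos w hw).le)
      have h3 := hχm_le _ hj'1
      have h4 := min_le_right pm χm
      linarith
  · -- general case
    have htpsi : ∀ x ∈ t, x ∈ Finset.Icc 1 N := fun x hx => hσ.1.2 x (by simp [hx])
    have hi_mem : t.getLastD 0 ∈ t := by
      obtain ⟨t', a, rfl⟩ : ∃ t' a, t = t' ++ [a] := by
        rcases t.eq_nil_or_concat with h | ⟨L, b, h⟩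
        · exact absurd h htne
        · exact ⟨L, b, by simpa using h⟩
      simp
    have hi : t.getLastD 0 ∈ Finset.Icc 1 N := htpsi _ hi_mem
    -- extract admissibility
    obtain ⟨hpij, hpij', hswt⟩ : 0 < p (t.getLastD 0) j ∧
        0 < p (t.getLastD 0 + N) (j + N) ∧ isSword p N t := by
      obtain ⟨τ, hτ⟩ := hσ.2
      rw [Gam, Finset.mem_filter, lifts_append] at hτ
      obtain ⟨hτm, hτc⟩ := hτ
      simp only [Finset.mem_biUnion, Finset.mem_insert, Finset.mem_singleton] at hτm
      obtain ⟨l, hl, rfl | rfl⟩ := hτm <;>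
      · have hlne : l ≠ [] := by
          intro h
          rw [h] at hl
          have := length_of_mem_lifts hl
          exact htne (List.length_eq_zero_iff.mp (by simpa using this.symm))
        obtain ⟨hcl, hpe⟩ := (chain'_concat hlne _).mp hτc
        have hll := getLastD_of_mem_lifts htne hl
        have hkey := edge_pattern hA hi hj hll (by omega) hpe
        exact ⟨hkey.1, hkey.2, ⟨⟨htne, htpsi⟩, ⟨l, Finset.mem_filter.mpr ⟨hl, hcl⟩⟩⟩⟩
    have hsw := sword_bounds hsim' hA hswt
    have hsr := hsim' _ hi j hj (isSword_pair hi hj hpij)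
    have hmul := muJ_concat (χ := χ) hN0 hp0 htne j
    have hterm_nonneg : ∀ τ ∈ Gam p N t, 0 ≤ χ (τ.headD 0) * pword p τ := by
      intro τ hτ
      have hτl := (Finset.mem_filter.mp hτ).1
      have hh := headD_of_mem_lifts htne hτl
      have hth : t.headD 0 ∈ t := by
        cases t with
        | nil => exact absurd rfl htne
        | cons a s => simp
      have hthm := htpsi _ hth
      have hmem2 : τ.headD 0 ∈ Finset.Icc 1 (2 * N) := by
        simp only [Finset.mem_Icc] at hthm ⊢
        rcases hh with h | h <;> omega
      exact mul_nonneg (hχpos _ hmem2).le (pword_nonneg hp0 τ)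
    have hlast : ∀ τ ∈ Gam p N t, τ.getLastD 0 = t.getLastD 0 ∨
        τ.getLastD 0 = t.getLastD 0 + N :=
      fun τ hτ => getLastD_of_mem_lifts htne (Finset.mem_filter.mp hτ).1
    have hlow : pm * muJ p χ N t ≤ muJ p χ N (t ++ [j]) := by
      rw [hmul, muJ, Finset.mul_sum]
      apply Finset.sum_le_sum
      intro τ hτ
      have hw : pm ≤ p (τ.getLastD 0) j + p (τ.getLastD 0) (j + N) := by
        rcases hlast τ hτ with h | h <;> rw [h]
        · have h1 := hpm_le _ _ (hIccN _ hi) (hIccN j hj) hpij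
          have h2 := hp0 (t.getLastD 0) (j + N)
          linarith
        · have h1 := hpm_le _ _ (hIccNp _ hi) (hIccNp j hj) hpij'
          have h2 := hp0 (t.getLastD 0 + N) j
          linarith
      rw [mul_comm pm]
      exact mul_le_mul_of_nonneg_left hw (hterm_nonneg τ hτ)
    have hup : muJ p χ N (t ++ [j]) ≤ (1 - pm) * muJ p χ N t := by
      rw [hmul, muJ, Finset.mul_sum]
      apply Finset.sum_le_sum
      intro τ hτ
      have hw : p (τ.getLastD 0) j + p (τ.getLastD 0) (j + N) ≤ 1 - pm := by
        rcases hlast τ hτ with h | h <;> rw [h]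
        · exact hrow _ _ (hIccN _ hi) hj
        · exact hrow _ _ (hIccNp _ hi) hj
      rw [mul_comm (1 - pm)]
      exact mul_le_mul_of_nonneg_left hw (hterm_nonneg τ hτ)
    have hmuJt_nonneg : 0 ≤ muJ p χ N t := Finset.sum_nonneg hterm_nonneg
    have hmuJσ_nonneg : 0 ≤ muJ p χ N (t ++ [j]) :=
      le_trans (mul_nonneg hpm_pos.le hmuJt_nonneg) hlow
    have hswe : sword sr (t ++ [j]) = sword sr t * sr (t.getLastD 0) j := sword_concat htne j
    have hsmnle := hsmn_le _ j hi hj hpij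
    have hstpos : 0 < sword sr t ^ r := Real.rpow_pos_of_pos hsw.1 r
    have hErσ : Er p χ sr N r (t ++ [j])
        = muJ p χ N (t ++ [j]) * (sword sr t ^ r * sr (t.getLastD 0) j ^ r) := by
      rw [Er, if_neg (by simp), hswe, Real.mul_rpow hsw.1.le hsr.1.le]
    have hErt : Er p χ sr N r t = muJ p χ N t * sword sr t ^ r := by
      rw [Er, if_neg htne]
    rw [hdrop, hErσ, hErt]
    constructor
    · calc min χm (pm * smn ^ r) * (muJ p χ N t * sword sr t ^ r)
          ≤ (pm * smn ^ r) * (muJ p χ N t * sword sr t ^ r) :=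
            mul_le_mul_of_nonneg_right (min_le_right _ _)
              (mul_nonneg hmuJt_nonneg hstpos.le)
        _ = (pm * muJ p χ N t) * (smn ^ r * sword sr t ^ r) := by ring
        _ ≤ muJ p χ N (t ++ [j]) * (sr (t.getLastD 0) j ^ r * sword sr t ^ r) := by
            apply mul_le_mul hlow
            · exact mul_le_mul_of_nonneg_right
                (Real.rpow_le_rpow hsmn_pos.le hsmnle hr.le) hstpos.le
            · exact mul_nonneg (Real.rpow_nonneg hsmn_pos.le r) hstpos.le
            · exact hmuJσ_nonneg
        _ = muJ p χ N (t ++ [j]) * (sword sr t ^ r * sr (t.getLastD 0) j ^ r) := by ring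
    · have hsr1 : sr (t.getLastD 0) j ^ r ≤ 1 := Real.rpow_le_one hsr.1.le hsr.2.le hr.le
      calc muJ p χ N (t ++ [j]) * (sword sr t ^ r * sr (t.getLastD 0) j ^ r)
          ≤ ((1 - pm) * muJ p χ N t) * (sword sr t ^ r * 1) := by
            apply mul_le_mul hup
            · exact mul_le_mul_of_nonneg_left hsr1 hstpos.le
            · exact mul_nonneg hstpos.le (Real.rpow_nonneg hsr.1.le r)
            · exact mul_nonneg (by linarith) hmuJt_nonneg
        _ = (1 - pm) * (muJ p χ N t * sword sr t ^ r) := by ring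
        _ ≤ (1 - min pm χm) * (muJ p χ N t * sword sr t ^ r) := by
            apply mul_le_mul_of_nonneg_right _ (mul_nonneg hmuJt_nonneg hstpos.le)
            have := min_le_left pm χm
            linarith


end MTM

end
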